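/- For every set X of n distinct integers contained in [1, 4n⁴·6^{n/2}] (with n sufficiently large), there exists a prime p ≤ 2n³ such that p does not divide x - y for any pair of distinct x, y ∈ X. -/

import Mathlib

open Finset Nat Filter

private lemma central_le_primorial (m : ℕ) (hm : 0 < m) :
    Nat.centralBinom m ≤ (2 * m) ^ (Nat.sqrt (2 * m) + 1) * primorial (2 * m) := by
  have m2_pos : 0 < 2 * m := by omega
  set S := (Finset.range (2 * m + 1)).filter Nat.Prime with hS
  set f : ℕ → ℕ := fun x => x ^ (Nat.centralBinom m).factorization x with hf
  have hprod : ∏ x ∈ S, f x = Nat.centralBinom m := by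
    rw [hS]
    rw [Finset.prod_filter_of_ne fun p _ h => ?_]
    · exact Nat.prod_pow_factorization_centralBinom m
    · contrapose! h
      rw [hf]
      simp only
      rw [Nat.factorization_eq_zero_of_not_prime _ h, pow_zero]
  rw [← hprod, ← Finset.prod_filter_mul_prod_filter_not S (· ≤ Nat.sqrt (2 * m))]
  apply Nat.mul_le_mul
  · refine (Finset.prod_le_pow_card _ _ (2 * m) fun p _ => ?_).trans ?_
    · exact Nat.pow_factorization_choose_le m2_pos
    · apply Nat.pow_le_pow_right m2_pos
      calc (S.filter (· ≤ Nat.sqrt (2 * m))).card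
          ≤ (Finset.range (Nat.sqrt (2 * m) + 1)).card := by
            apply Finset.card_le_card
            intro x hx
            simp only [Finset.mem_filter, Finset.mem_range] at hx ⊢
            omega
        _ = Nat.sqrt (2 * m) + 1 := Finset.card_range _
  · refine (Finset.prod_le_prod' fun p hp => (?_ : f p ≤ p)).trans ?_
    · obtain ⟨h1, h2⟩ := Finset.mem_filter.1 hp
      refine (pow_right_mono₀ (Finset.mem_filter.1 h1).2.one_lt.le ?_).trans (pow_one p).le
      exact Nat.factorization_choose_le_one (Nat.sqrt_lt'.mp <| not_le.1 h2)
    · rw [primorial]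
      exact Finset.prod_le_prod_of_subset_of_one_le' (Finset.filter_subset _ _)
        fun p hp _ => (Finset.mem_filter.1 hp).2.one_lt.le

private lemma ev_pow4 : ∀ᶠ n : ℕ in atTop, 4 * (n : ℝ) ^ 4 * 3 ^ n ≤ 4 ^ n := by
  have h := tendsto_pow_const_div_const_pow_of_one_lt 4 (by norm_num : (1 : ℝ) < 4 / 3)
  filter_upwards [h.eventually (gt_mem_nhds (by norm_num : (0 : ℝ) < 1 / 4))] with n hn
  have h3 : (0 : ℝ) < 3 ^ n := by positivity
  have h43 : (0 : ℝ) < (4 / 3 : ℝ) ^ n := by positivity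
  rw [div_lt_iff₀ h43] at hn
  have : ((4 : ℝ) / 3) ^ n * 3 ^ n = 4 ^ n := by
    rw [← mul_pow]; norm_num
  nlinarith [pow_nonneg (le_of_lt h3) 1]

private lemma ev_sqrt : ∀ᶠ n : ℕ in atTop, 2 * n ^ 3 ≤ 2 ^ Nat.sqrt n := by
  have h := tendsto_pow_const_div_const_pow_of_one_lt 6 (by norm_num : (1 : ℝ) < 2)
  have h2 := h.eventually (gt_mem_nhds (by norm_num : (0 : ℝ) < 1 / 128))
  obtain ⟨S, hS⟩ := eventually_atTop.1 h2
  rw [eventually_atTop]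
  refine ⟨(S + 1) ^ 2, fun n hn => ?_⟩
  set s := Nat.sqrt n with hs
  have hsS : S + 1 ≤ s := by
    have := Nat.sqrt_le_sqrt hn
    rwa [Nat.sqrt_eq'] at this
  have hs1 : 1 ≤ s := by omega
  have hn4 : n ≤ 4 * s ^ 2 := by
    have h1 : n < (s + 1) ^ 2 := Nat.lt_succ_sqrt' n
    nlinarith
  have hkey : (128 : ℕ) * s ^ 6 ≤ 2 ^ s := by
    have := hS s (by omega)
    have hpow : (0 : ℝ) < 2 ^ s := by positivity
    rw [div_lt_iff₀ hpow] at this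
    have : (128 : ℝ) * (s : ℝ) ^ 6 < 2 ^ s := by linarith
    exact_mod_cast this.le
  calc 2 * n ^ 3 ≤ 2 * (4 * s ^ 2) ^ 3 := by
        exact Nat.mul_le_mul_left 2 (Nat.pow_le_pow_left hn4 3)
    _ = 128 * s ^ 6 := by ring
    _ ≤ 2 ^ s := hkey

theorem exists_prime_dividing_no_difference :
    ∃ N : ℕ, ∀ n : ℕ, N ≤ n → ∀ X : Finset ℤ, X.card = n →
      (∀ x ∈ X, 1 ≤ x ∧ (x : ℝ) ≤ 4 * (n : ℝ) ^ 4 * (6 : ℝ) ^ ((n : ℝ) / 2)) →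
      ∃ p : ℕ, p.Prime ∧ p ≤ 2 * n ^ 3 ∧
        ∀ x ∈ X, ∀ y ∈ X, x ≠ y → ¬ ((p : ℤ) ∣ x - y) := by
  obtain ⟨N, hN⟩ := eventually_atTop.1 (ev_pow4.and (ev_sqrt.and (eventually_ge_atTop 16)))
  refine ⟨N, fun n hn X hcard hX => ?_⟩
  obtain ⟨h4, hsq, h16⟩ := hN n hn
  by_contra hcon
  push_neg at hcon
  -- every prime p ≤ 2n³ divides some difference
  set m := n ^ 3 with hm
  set D : ℤ := ∏ q ∈ X.offDiag, (q.1 - q.2) with hD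
  -- bound on differences
  have hdiff : ∀ q ∈ X.offDiag, (q.1 - q.2).natAbs ≤ 4 ^ n := by
    rintro ⟨x, y⟩ hq
    rw [Finset.mem_offDiag] at hq
    obtain ⟨hx, hy, _⟩ := hq
    obtain ⟨hx1, hx2⟩ := hX x hx
    obtain ⟨hy1, hy2⟩ := hX y hy
    have hB : 4 * (n : ℝ) ^ 4 * (6 : ℝ) ^ ((n : ℝ) / 2) ≤ 4 ^ n := by
      refine le_trans ?_ h4
      have h69 : (6 : ℝ) ^ ((n : ℝ) / 2) ≤ (9 : ℝ) ^ ((n : ℝ) / 2) := by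
        apply Real.rpow_le_rpow (by norm_num) (by norm_num) (by positivity)
      have h9 : (9 : ℝ) ^ ((n : ℝ) / 2) = 3 ^ n := by
        rw [show (9 : ℝ) = 3 ^ (2 : ℝ) by
          rw [show ((2 : ℝ)) = ((2 : ℕ) : ℝ) by norm_num, Real.rpow_natCast]; norm_num]
        rw [← Real.rpow_mul (by norm_num)]
        rw [show (2 : ℝ) * ((n : ℝ) / 2) = ((n : ℕ) : ℝ) by ring]
        exact Real.rpow_natCast 3 n
      rw [h9] at h69
      have hn4 : (0 : ℝ) ≤ 4 * (n : ℝ) ^ 4 := by positivity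
      nlinarith
    have habs : |((x - y : ℤ) : ℝ)| ≤ ((4 ^ n : ℕ) : ℝ) := by
      push_cast
      rw [abs_le]
      have hx1' : (1 : ℝ) ≤ (x : ℝ) := by exact_mod_cast hx1
      have hy1' : (1 : ℝ) ≤ (y : ℝ) := by exact_mod_cast hy1
      constructor
      · linarith
      · linarith
    have hZ : |x - y| ≤ ((4 ^ n : ℕ) : ℤ) := by exact_mod_cast habs
    rw [Int.abs_eq_natAbs] at hZ
    exact_mod_cast hZ
  have hD_ne : D ≠ 0 := by
    rw [hD, Finset.prod_ne_zero_iff]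
    rintro ⟨x, y⟩ hq
    rw [Finset.mem_offDiag] at hq
    exact sub_ne_zero.2 hq.2.2
  -- primorial² divides |D|
  set S := (Finset.range (2 * m + 1)).filter Nat.Prime with hSdef
  have hdvd : ∀ p ∈ S, ((p : ℤ)) ^ 2 ∣ D := by
    intro p hp
    rw [hSdef, Finset.mem_filter, Finset.mem_range] at hp
    obtain ⟨hpr, hpp⟩ := hp
    obtain ⟨x, hx, y, hy, hxy, hpd⟩ := hcon p hpp (by omega)
    have hxym : (x, y) ∈ X.offDiag := Finset.mem_offDiag.2 ⟨hx, hy, hxy⟩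
    have hyxm : (y, x) ∈ X.offDiag.erase (x, y) := by
      rw [Finset.mem_erase]
      exact ⟨by simp [Prod.ext_iff]; intro h; exact fun h2 => hxy h.symm,
        Finset.mem_offDiag.2 ⟨hy, hx, hxy.symm⟩⟩
    have h1 := Finset.mul_prod_erase X.offDiag (fun q => q.1 - q.2) hxym
    have h2 := Finset.mul_prod_erase (X.offDiag.erase (x, y)) (fun q => q.1 - q.2) hyxm
    rw [hD, ← h1, ← h2]
    simp only
    have hpd2 : (p : ℤ) ∣ y - x := dvd_sub_comm.1 hpd
    rw [pow_two]
    exact mul_dvd_mul hpd (hpd2.mul_right _)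
  have hprim_dvd : ((primorial (2 * m) : ℤ)) ^ 2 ∣ D := by
    have hcop : (↑S : Set ℕ).Pairwise (Function.onFun IsCoprime fun p : ℕ => ((p : ℤ)) ^ 2) := by
      intro p hp q hq hpq
      simp only [Function.onFun]
      apply IsCoprime.pow
      rw [Int.isCoprime_iff_gcd_eq_one]
      simp only [Int.gcd_natCast_natCast]
      rw [hSdef] at hp hq
      simp only [Finset.coe_filter, Set.mem_setOf_eq, Finset.mem_range] at hp hq
      exact (Nat.coprime_primes hp.2 hq.2).2 hpq
    have h := Finset.prod_dvd_of_coprime hcop hdvd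
    have hprim : primorial (2 * m) = ∏ p ∈ S, p := rfl
    rwa [Finset.prod_pow, ← Nat.cast_prod, ← hprim] at h

  have hprim_le : primorial (2 * m) ≤ 2 ^ m := by
    have hdvd_nat : (primorial (2 * m)) ^ 2 ∣ D.natAbs := by
      have h := Int.natAbs_dvd_natAbs.2 hprim_dvd
      rwa [Int.natAbs_pow, Int.natAbs_natCast] at h
    have hDle : D.natAbs ≤ (2 ^ m) ^ 2 := by
      calc D.natAbs = ∏ q ∈ X.offDiag, (q.1 - q.2).natAbs := by
            rw [hD]; exact map_prod Int.natAbsHom _ _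
        _
          ≤ (4 ^ n) ^ X.offDiag.card := Finset.prod_le_pow_card _ _ _ hdiff
        _ = (4 ^ n) ^ (n * n - n) := by rw [Finset.offDiag_card, hcard]
        _ ≤ (4 ^ n) ^ (n * n) := Nat.pow_le_pow_right (by positivity) (Nat.sub_le _ _)
        _ = 2 ^ (2 * (n * (n * n))) := by
            rw [show (4 : ℕ) = 2 ^ 2 by norm_num, ← pow_mul, ← pow_mul]
        _ = (2 ^ m) ^ 2 := by
            rw [← pow_mul]
            congr 1
            rw [hm]; ring
    have := Nat.le_of_dvd (by positivity) hdvd_nat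
    have hsq' : (primorial (2 * m)) ^ 2 ≤ (2 ^ m) ^ 2 := this.trans hDle
    exact (Nat.pow_le_pow_iff_left (n := 2) (by norm_num)).1 hsq'
  -- central binomial bounds give contradiction
  have hm4 : 4 ≤ m := by
    rw [hm]
    exact le_trans (by omega) (Nat.le_self_pow (by norm_num) n)
  have hm0 : 0 < m := by omega
  have H1 : 4 ^ m < m * Nat.centralBinom m := Nat.four_pow_lt_mul_centralBinom m hm4
  have H2 := central_le_primorial m hm0
  -- (2m)^(sqrt(2m)+2) ≤ 2^m
  set s := Nat.sqrt n with hs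
  set e := Nat.sqrt (2 * m) with he
  have hs1 : 1 ≤ s := by
    have : Nat.sqrt 16 ≤ s := Nat.sqrt_le_sqrt h16
    simpa using this.trans' (by norm_num)
  have hn4s : n ≤ 4 * s ^ 2 := by
    have h1 : n < (s + 1) ^ 2 := Nat.lt_succ_sqrt' n
    nlinarith
  have hsn : s ^ 2 ≤ n := Nat.sqrt_le' n
  have he_le : e ≤ 3 * n * s := by
    rw [he]
    have : 2 * m ≤ (3 * n * s) ^ 2 := by
      calc 2 * m = 2 * n ^ 2 * n := by rw [hm]; ring
        _ ≤ 2 * n ^ 2 * (4 * s ^ 2) := Nat.mul_le_mul_left _ hn4s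
        _ ≤ (3 * n * s) ^ 2 := by nlinarith [sq_nonneg (n * s)]
    calc Nat.sqrt (2 * m) ≤ Nat.sqrt ((3 * n * s) ^ 2) := Nat.sqrt_le_sqrt this
      _ = 3 * n * s := Nat.sqrt_eq' _
  have hkey : (2 * m) ^ (e + 2) ≤ 2 ^ m := by
    calc (2 * m) ^ (e + 2) ≤ (2 ^ s) ^ (e + 2) := by
          apply Nat.pow_le_pow_left
          rw [hm]; exact hsq
      _ = 2 ^ (s * (e + 2)) := by rw [← pow_mul]
      _ ≤ 2 ^ m := by
          apply Nat.pow_le_pow_right (by norm_num)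
          have h1 : e + 2 ≤ 4 * n * s := by nlinarith [Nat.mul_le_mul h16 hs1, he_le]
          calc s * (e + 2) ≤ s * (4 * n * s) := Nat.mul_le_mul_left _ h1
            _ = 4 * n * s ^ 2 := by ring
            _ ≤ 4 * n * n := Nat.mul_le_mul_left _ hsn
            _ ≤ m := by
                rw [hm]
                calc 4 * n * n ≤ n * n * n :=
                      Nat.mul_le_mul_right n (Nat.mul_le_mul_right n (by omega))
                  _ = n ^ 3 := by ring
  have : 4 ^ m < 4 ^ m := by
    calc 4 ^ m < m * Nat.centralBinom m := H1
      _ ≤ m * ((2 * m) ^ (e + 1) * primorial (2 * m)) := Nat.mul_le_mul_left _ H2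
      _ ≤ (2 * m) ^ (e + 2) * primorial (2 * m) := by
          rw [← mul_assoc, pow_succ]
          apply Nat.mul_le_mul_right
          rw [mul_comm]
          exact Nat.mul_le_mul_left _ (by omega)
      _ ≤ 2 ^ m * 2 ^ m := Nat.mul_le_mul hkey hprim_le
      _ = 4 ^ m := by rw [← pow_add, show (4:ℕ) = 2^2 by norm_num, ← pow_mul]; ring_nf
  exact lt_irrefl _ this
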